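/- For every antisymmetric 8×8 complex matrix X (Xᵀ = −X), the trace of (ad X)⁴, where ad X is the endomorphism Y ↦ XY − YX of the space of antisymmetric 8×8 complex matrices, equals 3·(tr(X²))². -/

import Mathlib

open Matrix LinearMap

noncomputable section
namespace SO8Aux

variable {n : Type*} [Fintype n] [DecidableEq n]

def matEquivFun : Matrix n n ℂ ≃ₗ[ℂ] ((n × n) → ℂ) where
  toFun M p := M p.1 p.2
  invFun c := Matrix.of fun i j => c (i, j)
  map_add' _ _ := rfl
  map_smul' _ _ := rfl
  left_inv _ := rfl
  right_inv _ := rfl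

def matBasis : Module.Basis (n × n) ℂ (Matrix n n ℂ) := Module.Basis.ofEquivFun matEquivFun

lemma matBasis_apply (p : n × n) :
    (matBasis : Module.Basis (n × n) ℂ (Matrix n n ℂ)) p = Matrix.single p.1 p.2 1 := by
  ext i j
  simp [matBasis, Module.Basis.coe_ofEquivFun, matEquivFun, Matrix.single, Pi.single_apply,
    Prod.ext_iff, Matrix.of_apply]
  all_goals change Pi.single (M := fun _ : n × n => ℂ) _ 1 (_, _) = _
  all_goals simp [Pi.single_apply, Prod.ext_iff]
  aesop

lemma trace_end (g : Matrix n n ℂ →ₗ[ℂ] Matrix n n ℂ) :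
    trace ℂ (Matrix n n ℂ) g = ∑ p : n × n, g (Matrix.single p.1 p.2 1) p.1 p.2 := by
  rw [trace_eq_matrix_trace ℂ (matBasis : Module.Basis (n × n) ℂ (Matrix n n ℂ))]
  rw [Matrix.trace]
  congr 1
  ext p
  rw [Matrix.diag, toMatrix_apply, matBasis_apply]
  rfl

lemma mul_std_mul (A B : Matrix n n ℂ) (i j k l : n) :
    ((A * Matrix.single i j 1 * B : Matrix n n ℂ)) k l = A k i * B j l := by
  rw [mul_assoc]
  rw [Matrix.mul_apply]
  have : ∀ b, ((Matrix.single i j 1 * B : Matrix n n ℂ)) b l = if b = i then B j l else 0 := by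
    intro b
    by_cases h : b = i
    · subst h; simp
    · rw [if_neg h]; exact Matrix.single_mul_apply_of_ne _ _ _ _ _ h _
  simp only [this, mul_ite, mul_zero]
  simp

def P : Matrix n n ℂ →ₗ[ℂ] Matrix n n ℂ :=
  (2⁻¹ : ℂ) • (LinearMap.id - (Matrix.transposeLinearEquiv n n ℂ ℂ).toLinearMap)

lemma P_apply (M : Matrix n n ℂ) : P M = (2⁻¹ : ℂ) • (M - Mᵀ) := rfl

lemma trP (A B : Matrix n n ℂ) :
    trace ℂ (Matrix n n ℂ) (P ∘ₗ (mulLeft ℂ A ∘ₗ mulRight ℂ B)) =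
      2⁻¹ * (A.trace * B.trace - (Aᵀ * B).trace) := by
  rw [trace_end]
  have h : ∀ p : n × n, (P ∘ₗ (mulLeft ℂ A ∘ₗ mulRight ℂ B)) (Matrix.single p.1 p.2 1) p.1 p.2
      = 2⁻¹ * (A p.1 p.1 * B p.2 p.2 - A p.2 p.1 * B p.2 p.1) := by
    intro p
    rw [LinearMap.comp_apply, LinearMap.comp_apply, mulLeft_apply, mulRight_apply, P_apply]
    rw [Matrix.smul_apply, Matrix.sub_apply, Matrix.transpose_apply]
    rw [← mul_assoc, mul_std_mul, mul_std_mul]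
    simp [smul_eq_mul]
  simp only [h]
  rw [← Finset.mul_sum]
  congr 1
  rw [Fintype.sum_prod_type]
  simp only [Finset.sum_sub_distrib]
  have e1 : ∑ x : n, ∑ y : n, A x x * B y y = A.trace * B.trace := by
    rw [Matrix.trace, Matrix.trace, Finset.sum_mul_sum]
    simp [Matrix.diag]
  have e2 : ∑ x : n, ∑ y : n, A y x * B y x = (Aᵀ * B).trace := by
    rw [Matrix.trace]
    refine Finset.sum_congr rfl fun j _ => ?_
    rw [Matrix.diag, Matrix.mul_apply]
    refine Finset.sum_congr rfl fun i _ => ?_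
    rw [Matrix.transpose_apply]
  rw [e1, e2]

end SO8Aux
end

open Matrix LinearMap SO8Aux

attribute [local instance 100] LieRing.ofAssociativeRing

open Matrix LieAlgebra LieAlgebra.Orthogonal in
/-- For every antisymmetric 8×8 complex matrix `X` (`Xᵀ = −X`), the trace of `(ad X)⁴`
as an endomorphism of `so(8,ℂ)` equals `3·(tr(X²))²`. -/
theorem so8_adjoint_quartic_trace
    (X : Matrix (Fin 8) (Fin 8) ℂ) (hX : Xᵀ = -X) :
    LinearMap.trace ℂ (so (Fin 8) ℂ)
        ((ad ℂ (so (Fin 8) ℂ) ⟨X, (mem_so (Fin 8) ℂ X).mpr hX⟩) ^ 4) =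
      3 * (X ^ 2).trace ^ 2 := by
  classical
  set f : Matrix (Fin 8) (Fin 8) ℂ →ₗ[ℂ] Matrix (Fin 8) (Fin 8) ℂ := mulLeft ℂ X - mulRight ℂ X with hf
  set p : Submodule ℂ (Matrix (Fin 8) (Fin 8) ℂ) := (so (Fin 8) ℂ : LieSubalgebra ℂ (Matrix (Fin 8) (Fin 8) ℂ)).toSubmodule with hpdef
  have hp : ∀ y ∈ p, f y ∈ p := by
    intro y hy
    have hy' : yᵀ = -y := (mem_so (Fin 8) ℂ y).mp hy
    show X * y - y * X ∈ p
    rw [hpdef]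
    refine (LieSubalgebra.mem_toSubmodule _).mpr ((mem_so (Fin 8) ℂ _).mpr ?_)
    rw [transpose_sub, transpose_mul, transpose_mul, hX, hy']
    noncomm_ring
  have hA : ad ℂ (so (Fin 8) ℂ) ⟨X, (mem_so (Fin 8) ℂ X).mpr hX⟩ = f.restrict hp := by
    refine LinearMap.ext fun y => Subtype.ext ?_
    show (⁅(⟨X, (mem_so (Fin 8) ℂ X).mpr hX⟩ : so (Fin 8) ℂ), y⁆ : so (Fin 8) ℂ).val
      = f y.val
    rw [LieSubalgebra.coe_bracket, Ring.lie_def]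
    rfl
  rw [hA, Module.End.pow_restrict]
  have hF4 : ∀ x ∈ p, (f ^ 4) x ∈ p := Module.End.pow_apply_mem_of_forall_mem 4 hp
  have hg : ∀ x, (SO8Aux.P ∘ₗ f ^ 4) x ∈ p := by
    intro x
    refine (LieSubalgebra.mem_toSubmodule _).mpr ((mem_so (Fin 8) ℂ _).mpr ?_)
    show (SO8Aux.P ((f ^ 4) x))ᵀ = -SO8Aux.P ((f ^ 4) x)
    rw [SO8Aux.P_apply, transpose_smul, transpose_sub, transpose_transpose]
    rw [← smul_neg, neg_sub]
  have hres : LinearMap.restrict (f ^ 4) hF4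
      = LinearMap.restrict (SO8Aux.P ∘ₗ f ^ 4) (fun x _ => hg x) := by
    refine LinearMap.ext fun y => Subtype.ext ?_
    show (f ^ 4) y.val = SO8Aux.P ((f ^ 4) y.val)
    have hsk : ((f ^ 4) y.val)ᵀ = -((f ^ 4) y.val) :=
      (mem_so (Fin 8) ℂ _).mp ((LieSubalgebra.mem_toSubmodule _).mp (hF4 y.val y.property))
    rw [SO8Aux.P_apply, hsk, sub_neg_eq_add, ← two_smul ℂ, smul_smul]
    norm_num
  rw [hres]
  have heq := trace_restrict_eq_of_forall_mem p (SO8Aux.P ∘ₗ f ^ 4) hg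
  refine Eq.trans heq ?_
  have hf4End : f ^ 4
      = (mulLeft ℂ (X ^ 4) ∘ₗ mulRight ℂ (1 : Matrix (Fin 8) (Fin 8) ℂ))
        - (4 : ℂ) • (mulLeft ℂ (X ^ 3) ∘ₗ mulRight ℂ X)
        + (6 : ℂ) • (mulLeft ℂ (X ^ 2) ∘ₗ mulRight ℂ (X ^ 2))
        - (4 : ℂ) • (mulLeft ℂ X ∘ₗ mulRight ℂ (X ^ 3))
        + (mulLeft ℂ (1 : Matrix (Fin 8) (Fin 8) ℂ) ∘ₗ mulRight ℂ (X ^ 4)) := by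
    refine LinearMap.ext fun Y => ?_
    have hit : (f ^ 4) Y = f (f (f (f Y))) := by
      rw [pow_succ, pow_succ, pow_succ, pow_one]
      rfl
    rw [hit]
    simp only [hf, LinearMap.sub_apply, mulLeft_apply, mulRight_apply, LinearMap.add_apply,
      LinearMap.smul_apply, LinearMap.comp_apply]
    rw [show ((4 : ℂ) = ((4 : ℕ) : ℂ)) by norm_num, show ((6 : ℂ) = ((6 : ℕ) : ℂ)) by norm_num]
    rw [Nat.cast_smul_eq_nsmul, Nat.cast_smul_eq_nsmul, Nat.cast_smul_eq_nsmul]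
    noncomm_ring
  rw [hf4End]
  simp only [LinearMap.comp_add, LinearMap.comp_sub, LinearMap.comp_smul, map_add, map_sub,
    _root_.map_smul, trP]
  have h2 : (X ^ 2)ᵀ = X ^ 2 := by rw [transpose_pow, hX]; noncomm_ring
  have h3 : (X ^ 3)ᵀ = -(X ^ 3) := by rw [transpose_pow, hX]; noncomm_ring
  have h4 : (X ^ 4)ᵀ = X ^ 4 := by rw [transpose_pow, hX]; noncomm_ring
  have ht1 : X.trace = 0 := by
    have h := congrArg Matrix.trace hX
    rw [Matrix.trace_transpose, Matrix.trace_neg] at h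
    exact add_self_eq_zero.mp (by linear_combination h)
  have ht3 : (X ^ 3).trace = 0 := by
    have h := congrArg Matrix.trace h3
    rw [Matrix.trace_transpose, Matrix.trace_neg] at h
    exact add_self_eq_zero.mp (by linear_combination h)
  rw [h2, h3, h4]
  rw [transpose_one, one_mul, mul_one]
  rw [neg_mul, show X ^ 3 * X = X ^ 4 from (pow_succ X 3).symm,
      show X ^ 2 * X ^ 2 = X ^ 4 by rw [← pow_add],
      hX, neg_mul, show X * X ^ 3 = X ^ 4 from (pow_succ' X 3).symm]
  rw [Matrix.trace_one, ht1, ht3]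
  simp only [Fintype.card_fin, Matrix.trace_neg, smul_eq_mul]
  push_cast
  ring
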